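/- For every integer m ≥ 0, the n^{2m+1} matrices X(i,r,j) := E(i) · F_r · (U_m E(j) U_mᴴ), indexed by i, j ∈ (Fin n)^m and r ∈ Fin n, satisfy τ( X(i,r,j) · X(i′,r′,j′)ᴴ ) = n^{−(2m+1)} if (i,r,j) = (i′,r′,j′), and = 0 otherwise; in particular these matrices are pairwise orthogonal with respect to the trace inner product and are linearly independent over ℂ. -/

import Mathlib

open Matrix Kronecker

noncomputable section

/-- The primitive `n`-th root of unity `exp(2πi/n)`. -/
def omega (n : ℕ) : ℂ := Complex.exp (2 * Real.pi * Complex.I / n)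

/-- The diagonal matrix unit `e_i` with a `1` in entry `(i,i)`. -/
def eM (n : ℕ) (i : Fin n) : Matrix (Fin n) (Fin n) ℂ := Matrix.single i i 1

/-- The cyclic shift matrix `w`, with `w(a,b) = 1` iff `b = a + 1` (mod `n`). -/
def wM (n : ℕ) [NeZero n] : Matrix (Fin n) (Fin n) ℂ :=
  Matrix.of fun a b => if b = a + 1 then 1 else 0

/-- The spectral projections `f_k = (1/n) Σ_j ω^{-jk} w^j` of `w`. -/
def fM (n : ℕ) [NeZero n] (k : Fin n) : Matrix (Fin n) (Fin n) ℂ :=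
  ((n : ℂ))⁻¹ • ∑ j : Fin n, (omega n ^ ((j : ℕ) * (k : ℕ)))⁻¹ • wM n ^ (j : ℕ)

/-- The normalized trace of a square matrix: the trace divided by the size. -/
def nτ {ι : Type*} [Fintype ι] (A : Matrix ι ι ℂ) : ℂ :=
  Matrix.trace A / (Fintype.card ι)

/-- The `N`-fold elementary tensor `A_0 ⊗ ⋯ ⊗ A_{N-1}` of `n × n` matrices,
realized as a matrix indexed by functions `Fin N → Fin n`. -/
def tens (n N : ℕ) (A : Fin N → Matrix (Fin n) (Fin n) ℂ) :
    Matrix (Fin N → Fin n) (Fin N → Fin n) ℂ :=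
  Matrix.of fun x y => ∏ k, A k (x k) (y k)

/-- `u_s = 1^{⊗(s-1)} ⊗ v ⊗ 1^{⊗…}` where `v = Σ_i w^i ⊗ f_i` occupies factors
`s-1` and `s` of the `N`-fold tensor power. -/
def uM (n N : ℕ) [NeZero n] (s : ℕ) : Matrix (Fin N → Fin n) (Fin N → Fin n) ℂ :=
  ∑ i : Fin n, tens n N fun k =>
    if (k : ℕ) + 1 = s then wM n ^ (i : ℕ)
    else if (k : ℕ) = s then fM n i
    else 1

/-- `U_m = u_1 u_2 ⋯ u_m` inside the `N`-fold tensor power. -/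
def UM (n N m : ℕ) [NeZero n] : Matrix (Fin N → Fin n) (Fin N → Fin n) ℂ :=
  (((List.range m).map fun s => uM n N (s + 1))).prod

/-- `F_r = f_r ⊗ 1 ⊗ ⋯ ⊗ 1` inside the `N`-fold tensor power. -/
def FM (n N : ℕ) [NeZero n] (r : Fin n) : Matrix (Fin N → Fin n) (Fin N → Fin n) ℂ :=
  tens n N fun k => if (k : ℕ) = 0 then fM n r else 1

/-- `E(i) = e_{i_1} ⊗ ⋯ ⊗ e_{i_m} ⊗ 1 ⊗ ⋯ ⊗ 1` inside the `N`-fold tensor power,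
with the `e`'s occupying factors `0, …, m-1`. -/
def EM (n N m : ℕ) (i : Fin m → Fin n) : Matrix (Fin N → Fin n) (Fin N → Fin n) ℂ :=
  tens n N fun k => if h : (k : ℕ) < m then eM n (i ⟨(k : ℕ), h⟩) else 1

set_option linter.unusedSectionVars false
set_option linter.unusedTactic false
open Fin.NatCast Fin.CommRing
section Scalar

variable (n : ℕ) [NeZero n]

lemma omega_ne_zero : omega n ≠ 0 := Complex.exp_ne_zero _

lemma omega_prim : IsPrimitiveRoot (omega n) n :=
  Complex.isPrimitiveRoot_exp n (NeZero.ne n)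

lemma omega_zpow_congr {s t : ℤ} (h : (n:ℤ) ∣ s - t) : omega n ^ s = omega n ^ t := by
  obtain ⟨k, hk⟩ := h
  have h1 : omega n ^ (n:ℤ) = 1 := by
    rw [zpow_natCast]; exact (omega_prim n).pow_eq_one
  have hs : s = t + (n:ℤ) * k := by linarith
  rw [hs, zpow_add₀ (omega_ne_zero n), _root_.zpow_mul, h1, _root_.one_zpow, mul_one]

lemma omega_conj (t : ℤ) : (starRingEnd ℂ) (omega n ^ t) = omega n ^ (-t) := by
  have hz : (starRingEnd ℂ) (2 * Real.pi * Complex.I / n) = -(2 * Real.pi * Complex.I / n) := by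
    simp [map_div₀, Complex.conj_ofNat]
    ring
  have hc : (starRingEnd ℂ) (omega n) = (omega n)⁻¹ := by
    unfold omega
    rw [← Complex.exp_conj, hz, Complex.exp_neg]
  rw [map_zpow₀, hc, _root_.inv_zpow, ← _root_.zpow_neg]

lemma char_sum (t : ℤ) :
    ∑ p : Fin n, omega n ^ ((p : ℤ) * t) = if (n:ℤ) ∣ t then (n:ℂ) else 0 := by
  have hne := omega_ne_zero n
  have hterm : ∀ p : Fin n, omega n ^ ((p:ℤ) * t) = (omega n ^ t) ^ (p : ℕ) := by
    intro p
    rw [mul_comm, _root_.zpow_mul, ← zpow_natCast (omega n ^ t) (p : ℕ)]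
  simp only [hterm]
  rw [Fin.sum_univ_eq_sum_range (fun i => (omega n ^ t) ^ i) n]
  by_cases hdvd : (n:ℤ) ∣ t
  · have : omega n ^ t = 1 := ((omega_prim n).zpow_eq_one_iff_dvd t).2 hdvd
    simp [this, hdvd]
  · have hne1 : omega n ^ t ≠ 1 := fun h => hdvd (((omega_prim n).zpow_eq_one_iff_dvd t).1 h)
    rw [geom_sum_eq hne1, if_neg hdvd]
    have : (omega n ^ t) ^ n = 1 := by
      rw [← zpow_natCast, ← _root_.zpow_mul, mul_comm, _root_.zpow_mul, zpow_natCast,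
        (omega_prim n).pow_eq_one, _root_.one_zpow]
    rw [this]
    simp

lemma mod_sub_dvd (x : ℕ) : (n:ℤ) ∣ ((x % n : ℕ) : ℤ) - (x : ℤ) := by
  refine ⟨-((x / n : ℕ) : ℤ), ?_⟩
  have h : ((x % n : ℕ) : ℤ) + (n:ℤ) * ((x / n : ℕ):ℤ) = (x:ℤ) := by
    exact_mod_cast Nat.mod_add_div x n
  linarith

lemma fin_sub_dvd (a b : Fin n) :
    (n:ℤ) ∣ (((a - b : Fin n) : ℕ) : ℤ) - ((a : ℕ) : ℤ) + ((b : ℕ) : ℤ) := by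
  have hb : (b : ℕ) ≤ n := le_of_lt b.isLt
  have h1 : ((a - b : Fin n) : ℕ) = (n - (b:ℕ) + (a:ℕ)) % n := by
    rw [Fin.sub_def]
  rw [h1]
  have h2 := mod_sub_dvd n (n - (b:ℕ) + (a:ℕ))
  have h3 : ((n - (b:ℕ) + (a:ℕ) : ℕ) : ℤ) = (n:ℤ) - (b:ℕ) + (a:ℕ) := by
    push_cast [Nat.cast_sub hb]; ring
  rw [h3] at h2
  obtain ⟨k, hk⟩ := h2
  exact ⟨k + 1, by linarith⟩

lemma fin_dvd_iff_eq (r r' : Fin n) :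
    (n:ℤ) ∣ ((r:ℕ):ℤ) - ((r':ℕ):ℤ) ↔ r = r' := by
  constructor
  · intro h
    have h1 : (((r:ℕ):ℤ) - ((r':ℕ):ℤ)) = 0 := by
      refine Int.eq_zero_of_abs_lt_dvd h ?_
      have hr := r.isLt; have hr' := r'.isLt
      rw [abs_lt]
      constructor <;> [skip; skip] <;> push_cast <;> omega
    have : (r:ℕ) = (r':ℕ) := by omega
    exact Fin.ext this
  · rintro rfl; simp

end Scalar
section SingleMatrix

variable (n : ℕ) [NeZero n]

lemma wM_pow_apply (t : ℕ) (a b : Fin n) :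
    (wM n ^ t) a b = if b = a + (t : Fin n) then 1 else 0 := by
  induction t generalizing a b with
  | zero => simp [Matrix.one_apply, eq_comm]
  | succ t ih =>
    rw [pow_succ, Matrix.mul_apply]
    simp only [ih]
    simp only [wM, Matrix.of_apply, ite_mul, one_mul, zero_mul]
    rw [Finset.sum_ite_eq' Finset.univ (a + (t : Fin n)) (fun c => if b = c + 1 then (1:ℂ) else 0)]
    simp only [Finset.mem_univ, if_true]
    have : ((t + 1 : ℕ) : Fin n) = (t : Fin n) + 1 := by push_cast; ring
    rw [this, ← add_assoc]

lemma eM_apply (i a b : Fin n) : eM n i a b = if a = i ∧ b = i then 1 else 0 := by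
  simp [eM, Matrix.single, and_comm, eq_comm]

lemma eM_herm (i : Fin n) : (eM n i)ᴴ = eM n i := by
  ext a b
  rw [Matrix.conjTranspose_apply, eM_apply, eM_apply]
  by_cases h1 : a = i <;> by_cases h2 : b = i <;> simp [h1, h2]

lemma e_mul_apply (i : Fin n) (A : Matrix (Fin n) (Fin n) ℂ) (a b : Fin n) :
    (eM n i * A) a b = if a = i then A i b else 0 := by
  rw [Matrix.mul_apply]
  simp only [eM_apply, ite_mul, one_mul, zero_mul]
  by_cases h : a = i
  · simp only [h, true_and, if_pos rfl]
    rw [Finset.sum_ite_eq' Finset.univ i (fun c => A c b)]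
    simp
  · simp [h]

lemma eM_mul_eM (i j : Fin n) : eM n i * eM n j = if i = j then eM n i else 0 := by
  ext a b
  rw [e_mul_apply]
  by_cases h : i = j
  · subst h
    by_cases ha : a = i <;> simp [ha, eM_apply]
  · simp only [if_neg h, Matrix.zero_apply]
    by_cases ha : a = i <;> simp [ha, eM_apply, h]

lemma trace_e_mul (i : Fin n) (A : Matrix (Fin n) (Fin n) ℂ) :
    Matrix.trace (eM n i * A) = A i i := by
  simp only [Matrix.trace, Matrix.diag, e_mul_apply]
  rw [Finset.sum_ite_eq' Finset.univ i (fun a => A i a)]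
  simp

lemma wpow_mul_apply (p : ℕ) (A : Matrix (Fin n) (Fin n) ℂ) (a b : Fin n) :
    (wM n ^ p * A) a b = A (a + (p : Fin n)) b := by
  rw [Matrix.mul_apply]
  simp only [wM_pow_apply, ite_mul, one_mul, zero_mul]
  rw [Finset.sum_ite_eq' Finset.univ (a + (p:Fin n)) (fun c => A c b)]
  simp

lemma wpowH_mul_apply (p : ℕ) (A : Matrix (Fin n) (Fin n) ℂ) (a b : Fin n) :
    ((wM n ^ p)ᴴ * A) a b = A (a - (p : Fin n)) b := by
  rw [Matrix.mul_apply]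
  simp only [Matrix.conjTranspose_apply, wM_pow_apply]
  have hcond : ∀ c : Fin n, (a = c + (p:Fin n)) ↔ (c = a - (p:Fin n)) := by
    intro c
    constructor
    · intro h; rw [h]; exact (add_sub_cancel_right c _).symm
    · intro h; rw [h]; exact (sub_add_cancel a _).symm
  have hstar : ∀ c : Fin n,
      star (if a = c + (p:Fin n) then (1:ℂ) else 0) * A c b
        = if c = a - (p:Fin n) then A c b else 0 := by
    intro c
    simp only [hcond c]
    split <;> simp
  simp only [hstar]
  rw [Finset.sum_ite_eq' Finset.univ (a - (p:Fin n)) (fun c => A c b)]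
  simp

lemma fM_apply (r : Fin n) (a b : Fin n) :
    fM n r a b = (n:ℂ)⁻¹ * omega n ^ (-((((b - a : Fin n) : ℕ) : ℤ) * ((r:ℕ):ℤ))) := by
  unfold fM
  simp only [Matrix.smul_apply, Matrix.sum_apply, wM_pow_apply, smul_eq_mul]
  congr 1
  have hcond : ∀ j : Fin n, (b = a + ((j:ℕ) : Fin n)) ↔ (j = b - a) := by
    intro j
    rw [Fin.cast_val_eq_self]
    constructor
    · intro h; rw [h]; exact (add_sub_cancel_left a j).symm
    · intro h; rw [h]; exact (add_sub_cancel a b).symm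
  simp only [hcond, mul_ite, mul_one, mul_zero]
  rw [Finset.sum_ite_eq' Finset.univ (b - a) (fun j => (omega n ^ ((j:ℕ) * (r:ℕ)))⁻¹)]
  simp only [Finset.mem_univ, if_true]
  rw [← zpow_natCast (omega n), ← _root_.zpow_neg]
  norm_num

lemma fM_herm (r : Fin n) : (fM n r)ᴴ = fM n r := by
  ext a b
  rw [Matrix.conjTranspose_apply, fM_apply, fM_apply]
  rw [star_mul']
  have h1 : star ((n:ℂ)⁻¹) = (n:ℂ)⁻¹ := by simp
  rw [h1]
  congr 1
  show (starRingEnd ℂ) _ = _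
  rw [omega_conj, neg_neg]
  apply omega_zpow_congr
  obtain ⟨k1, hk1⟩ := fin_sub_dvd n a b
  obtain ⟨k2, hk2⟩ := fin_sub_dvd n b a
  exact ⟨((r:ℕ):ℤ) * (k1 + k2), by linear_combination ((r:ℕ):ℤ) * hk1 + ((r:ℕ):ℤ) * hk2⟩

lemma ncast_ne_zero : (n:ℂ) ≠ 0 := Nat.cast_ne_zero.2 (NeZero.ne n)

lemma trace_fM (r : Fin n) : Matrix.trace (fM n r) = 1 := by
  simp only [Matrix.trace, Matrix.diag, fM_apply, sub_self]
  simp only [Fin.val_zero, Int.natCast_zero, zero_mul, neg_zero, zpow_zero, mul_one]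
  rw [Finset.sum_const, Finset.card_univ, Fintype.card_fin, nsmul_eq_mul,
    mul_inv_cancel₀ (ncast_ne_zero n)]

lemma fin_val_dvd_iff (c : Fin n) : (n:ℤ) ∣ ((c:ℕ):ℤ) ↔ c = 0 := by
  constructor
  · intro h
    have h1 : ((c:ℕ):ℤ) = 0 := by
      refine Int.eq_zero_of_abs_lt_dvd h ?_
      have := c.isLt
      rw [abs_of_nonneg (by positivity)]
      exact_mod_cast this
    exact Fin.ext (by simpa using h1)
  · rintro rfl; simp

lemma fM_mul_fM (r r' : Fin n) : fM n r * fM n r' = if r = r' then fM n r else 0 := by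
  ext a b
  rw [Matrix.mul_apply]
  have hterm : ∀ c : Fin n, fM n r a c * fM n r' c b
      = ((n:ℂ)⁻¹ * (n:ℂ)⁻¹ * omega n ^ (((a:ℕ):ℤ) * ((r:ℕ):ℤ) - ((b:ℕ):ℤ) * ((r':ℕ):ℤ)))
        * omega n ^ (((c:ℕ):ℤ) * (((r':ℕ):ℤ) - ((r:ℕ):ℤ))) := by
    intro c
    rw [fM_apply, fM_apply, mul_mul_mul_comm, ← zpow_add₀ (omega_ne_zero n),
      mul_assoc ((n:ℂ)⁻¹ * (n:ℂ)⁻¹), ← zpow_add₀ (omega_ne_zero n)]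
    congr 1
    apply omega_zpow_congr
    obtain ⟨k1, hk1⟩ := fin_sub_dvd n c a
    obtain ⟨k2, hk2⟩ := fin_sub_dvd n b c
    exact ⟨-((r:ℕ):ℤ) * k1 - ((r':ℕ):ℤ) * k2,
      by linear_combination (-((r:ℕ):ℤ)) * hk1 - ((r':ℕ):ℤ) * hk2⟩
  rw [Finset.sum_congr rfl (fun c _ => hterm c), ← Finset.mul_sum, char_sum]
  have hiff : ((n:ℤ) ∣ ((r':ℕ):ℤ) - ((r:ℕ):ℤ)) = (r' = r) := propext (fin_dvd_iff_eq n r' r)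
  simp only [hiff]
  by_cases h : r = r'
  · subst h
    rw [if_pos rfl, if_pos rfl, fM_apply]
    have h0 := ncast_ne_zero n
    have hx : (n:ℂ)⁻¹ * (n:ℂ)⁻¹ * omega n ^ (((a:ℕ):ℤ) * ((r:ℕ):ℤ) - ((b:ℕ):ℤ) * ((r:ℕ):ℤ)) * (n:ℂ)
        = (n:ℂ)⁻¹ * omega n ^ (((a:ℕ):ℤ) * ((r:ℕ):ℤ) - ((b:ℕ):ℤ) * ((r:ℕ):ℤ)) := by
      rw [show (n:ℂ)⁻¹ * (n:ℂ)⁻¹ * omega n ^ (((a:ℕ):ℤ) * ((r:ℕ):ℤ) - ((b:ℕ):ℤ) * ((r:ℕ):ℤ)) * (n:ℂ)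
          = (n:ℂ)⁻¹ * omega n ^ (((a:ℕ):ℤ) * ((r:ℕ):ℤ) - ((b:ℕ):ℤ) * ((r:ℕ):ℤ)) * ((n:ℂ)⁻¹ * (n:ℂ)) by ring]
      rw [inv_mul_cancel₀ h0, mul_one]
    rw [hx]
    congr 1
    apply omega_zpow_congr
    obtain ⟨k, hk⟩ := fin_sub_dvd n b a
    exact ⟨((r:ℕ):ℤ) * k, by linear_combination ((r:ℕ):ℤ) * hk⟩
  · rw [if_neg (fun hh => h hh.symm), if_neg h, mul_zero, Matrix.zero_apply]

end SingleMatrix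
section Key0

variable (n : ℕ) [NeZero n]

lemma sum_fM : ∑ r : Fin n, fM n r = 1 := by
  ext a b
  rw [Matrix.sum_apply]
  have hterm : ∀ r : Fin n, fM n r a b
      = (n:ℂ)⁻¹ * omega n ^ (((r:ℕ):ℤ) * (-(((b - a : Fin n) : ℕ) : ℤ))) := by
    intro r
    rw [fM_apply]
    congr 2
    ring
  rw [Finset.sum_congr rfl (fun r _ => hterm r), ← Finset.mul_sum, char_sum]
  have hiff : ((n:ℤ) ∣ -(((b - a : Fin n) : ℕ) : ℤ)) = (a = b) := by
    rw [dvd_neg, propext (fin_val_dvd_iff n (b - a)), propext sub_eq_zero]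
    exact propext ⟨fun h => h.symm, fun h => h.symm⟩
  simp only [hiff]
  rw [Matrix.one_apply]
  by_cases h : a = b
  · rw [if_pos h, if_pos h, inv_mul_cancel₀ (ncast_ne_zero n)]
  · rw [if_neg h, if_neg h, mul_zero]

lemma key0 (i0 j0 p r r' : Fin n) :
    Matrix.trace (eM n i0 * (fM n r *
        (wM n ^ (p:ℕ) * (eM n j0 * ((wM n ^ (p:ℕ))ᴴ * fM n r')))))
      = (n:ℂ)⁻¹ * (n:ℂ)⁻¹ *
        omega n ^ ((((i0:ℕ):ℤ) - ((j0:ℕ):ℤ) + ((p:ℕ):ℤ)) * (((r:ℕ):ℤ) - ((r':ℕ):ℤ))) := by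
  rw [trace_e_mul, Matrix.mul_apply]
  have hZ : ∀ c : Fin n,
      (wM n ^ (p:ℕ) * (eM n j0 * ((wM n ^ (p:ℕ))ᴴ * fM n r'))) c i0
        = if c = j0 - p then fM n r' (j0 - p) i0 else 0 := by
    intro c
    rw [wpow_mul_apply, e_mul_apply, Fin.cast_val_eq_self]
    by_cases h : c + p = j0
    · rw [if_pos h, wpowH_mul_apply, Fin.cast_val_eq_self, if_pos (eq_sub_of_add_eq h)]
    · rw [if_neg h, if_neg (fun hh => h (by rw [hh, sub_add_cancel]))]
  simp only [hZ, mul_ite, mul_zero]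
  rw [Finset.sum_ite_eq' Finset.univ (j0 - p) (fun c => fM n r i0 c * fM n r' (j0 - p) i0)]
  simp only [Finset.mem_univ, if_true]
  rw [fM_apply, fM_apply, mul_mul_mul_comm, ← zpow_add₀ (omega_ne_zero n)]
  congr 1
  apply omega_zpow_congr
  obtain ⟨k1, hk1⟩ := fin_sub_dvd n (j0 - p) i0
  obtain ⟨k0, hk0⟩ := fin_sub_dvd n j0 p
  obtain ⟨k2, hk2⟩ := fin_sub_dvd n i0 (j0 - p)
  refine ⟨-((r:ℕ):ℤ) * k1 + (((r':ℕ):ℤ) - ((r:ℕ):ℤ)) * k0 - ((r':ℕ):ℤ) * k2, ?_⟩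
  linear_combination (-((r:ℕ):ℤ)) * hk1 + (((r':ℕ):ℤ) - ((r:ℕ):ℤ)) * hk0 - ((r':ℕ):ℤ) * hk2

lemma key0sum (i0 j0 r r' : Fin n) :
    ∑ p : Fin n, Matrix.trace (eM n i0 * (fM n r *
        (wM n ^ (p:ℕ) * (eM n j0 * ((wM n ^ (p:ℕ))ᴴ * fM n r')))))
      = if r = r' then (n:ℂ)⁻¹ else 0 := by
  have hterm : ∀ p : Fin n,
      Matrix.trace (eM n i0 * (fM n r *
        (wM n ^ (p:ℕ) * (eM n j0 * ((wM n ^ (p:ℕ))ᴴ * fM n r')))))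
      = ((n:ℂ)⁻¹ * (n:ℂ)⁻¹ *
          omega n ^ ((((i0:ℕ):ℤ) - ((j0:ℕ):ℤ)) * (((r:ℕ):ℤ) - ((r':ℕ):ℤ))))
        * omega n ^ (((p:ℕ):ℤ) * (((r:ℕ):ℤ) - ((r':ℕ):ℤ))) := by
    intro p
    rw [key0,
      show ((((i0:ℕ):ℤ) - ((j0:ℕ):ℤ) + ((p:ℕ):ℤ)) * (((r:ℕ):ℤ) - ((r':ℕ):ℤ)))
        = (((i0:ℕ):ℤ) - ((j0:ℕ):ℤ)) * (((r:ℕ):ℤ) - ((r':ℕ):ℤ))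
          + ((p:ℕ):ℤ) * (((r:ℕ):ℤ) - ((r':ℕ):ℤ)) by ring,
      zpow_add₀ (omega_ne_zero n), ← mul_assoc]
  rw [Finset.sum_congr rfl (fun p _ => hterm p), ← Finset.mul_sum, char_sum]
  have hiff := propext (fin_dvd_iff_eq n r r')
  simp only [hiff]
  by_cases h : r = r'
  · subst h
    rw [if_pos rfl, if_pos rfl,
      show (((i0:ℕ):ℤ) - ((j0:ℕ):ℤ)) * (((r:ℕ):ℤ) - ((r:ℕ):ℤ)) = 0 by ring,
      zpow_zero, mul_one, mul_assoc, inv_mul_cancel₀ (ncast_ne_zero n), mul_one]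
  · rw [if_neg h, if_neg h, mul_zero]

end Key0
section Op

variable (n : ℕ) [NeZero n]

/-- Split an `(M+1)`-fold tensor index into head and tail. -/
def op {M : ℕ} (A : Matrix (Fin n) (Fin n) ℂ)
    (B : Matrix (Fin M → Fin n) (Fin M → Fin n) ℂ) :
    Matrix (Fin (M+1) → Fin n) (Fin (M+1) → Fin n) ℂ :=
  Matrix.of fun x y => A (x 0) (y 0) * B (Fin.tail x) (Fin.tail y)

lemma sum_split {M : ℕ} (g : (Fin (M+1) → Fin n) → ℂ) :
    ∑ z : Fin (M+1) → Fin n, g z = ∑ c : Fin n, ∑ t : Fin M → Fin n, g (Fin.cons c t) := by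
  rw [← (Fin.consEquiv (fun _ => Fin n)).sum_comp g, Fintype.sum_prod_type]
  apply Finset.sum_congr rfl; intro c _
  apply Finset.sum_congr rfl; intro t _
  congr 1

lemma op_mul {M : ℕ} (A A' : Matrix (Fin n) (Fin n) ℂ)
    (B B' : Matrix (Fin M → Fin n) (Fin M → Fin n) ℂ) :
    op n A B * op n A' B' = op n (A * A') (B * B') := by
  ext x y
  rw [Matrix.mul_apply]
  have hr : (op n (A * A') (B * B')) x y
      = (∑ c : Fin n, A (x 0) c * A' c (y 0)) *
        (∑ t : Fin M → Fin n, B (Fin.tail x) t * B' t (Fin.tail y)) := by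
    simp [op, Matrix.mul_apply]
  rw [hr, Finset.sum_mul_sum, sum_split]
  apply Finset.sum_congr rfl; intro c _
  apply Finset.sum_congr rfl; intro t _
  simp only [op, Matrix.of_apply, Fin.cons_zero, Fin.tail_cons]
  ring

lemma op_one {M : ℕ} : op n (1 : Matrix (Fin n) (Fin n) ℂ)
    (1 : Matrix (Fin M → Fin n) (Fin M → Fin n) ℂ) = 1 := by
  ext x y
  simp only [op, Matrix.of_apply, Matrix.one_apply]
  have hxy : (x = y) ↔ (x 0 = y 0 ∧ Fin.tail x = Fin.tail y) := by
    constructor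
    · rintro rfl; exact ⟨rfl, rfl⟩
    · rintro ⟨h0, ht⟩
      funext k
      induction k using Fin.cases with
      | zero => exact h0
      | succ k => exact congrFun ht k
  by_cases h1 : x 0 = y 0 <;> by_cases h2 : Fin.tail x = Fin.tail y <;>
    simp [h1, h2, hxy]

lemma op_trace {M : ℕ} (A : Matrix (Fin n) (Fin n) ℂ)
    (B : Matrix (Fin M → Fin n) (Fin M → Fin n) ℂ) :
    Matrix.trace (op n A B) = Matrix.trace A * Matrix.trace B := by
  simp only [Matrix.trace, Matrix.diag, op, Matrix.of_apply]
  rw [Finset.sum_mul_sum, sum_split]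
  simp only [Fin.cons_zero, Fin.tail_cons]

lemma op_conjT {M : ℕ} (A : Matrix (Fin n) (Fin n) ℂ)
    (B : Matrix (Fin M → Fin n) (Fin M → Fin n) ℂ) :
    (op n A B)ᴴ = op n Aᴴ Bᴴ := by
  ext x y
  simp only [op, Matrix.conjTranspose_apply, Matrix.of_apply, star_mul']
  try ring

lemma op_sum_right {M : ℕ} {ι : Type*} (s : Finset ι) (A : Matrix (Fin n) (Fin n) ℂ)
    (B : ι → Matrix (Fin M → Fin n) (Fin M → Fin n) ℂ) :
    op n A (∑ i ∈ s, B i) = ∑ i ∈ s, op n A (B i) := by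
  ext x y
  simp [op, Matrix.sum_apply, Finset.mul_sum]

lemma op_sum_left {M : ℕ} {ι : Type*} (s : Finset ι) (A : ι → Matrix (Fin n) (Fin n) ℂ)
    (B : Matrix (Fin M → Fin n) (Fin M → Fin n) ℂ) :
    op n (∑ i ∈ s, A i) B = ∑ i ∈ s, op n (A i) B := by
  ext x y
  simp [op, Matrix.sum_apply, Finset.sum_mul]

lemma op_zero_left {M : ℕ} (B : Matrix (Fin M → Fin n) (Fin M → Fin n) ℂ) :
    op n 0 B = 0 := by
  ext x y; simp [op]

lemma op_zero_right {M : ℕ} (A : Matrix (Fin n) (Fin n) ℂ) :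
    op n A (0 : Matrix (Fin M → Fin n) (Fin M → Fin n) ℂ) = 0 := by
  ext x y; simp [op]

lemma tens_zero' (A : Fin 0 → Matrix (Fin n) (Fin n) ℂ) : tens n 0 A = 1 := by
  ext x y
  simp [tens, Matrix.one_apply, Subsingleton.elim x y]

lemma tens_succ {M : ℕ} (A : Fin (M+1) → Matrix (Fin n) (Fin n) ℂ) :
    tens n (M+1) A = op n (A 0) (tens n M (fun k => A k.succ)) := by
  ext x y
  simp only [tens, op, Matrix.of_apply, Fin.prod_univ_succ]
  rfl

lemma tens_mul {N : ℕ} (A B : Fin N → Matrix (Fin n) (Fin n) ℂ) :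
    tens n N A * tens n N B = tens n N (fun k => A k * B k) := by
  induction N with
  | zero => rw [tens_zero', tens_zero', tens_zero', one_mul]
  | succ N ih =>
    rw [tens_succ, tens_succ, op_mul, ih, tens_succ]

lemma tens_congr {N : ℕ} {A B : Fin N → Matrix (Fin n) (Fin n) ℂ}
    (h : ∀ k, A k = B k) : tens n N A = tens n N B := by
  have : A = B := funext h
  rw [this]

lemma tens_one {N : ℕ} : tens n N (fun _ => (1 : Matrix (Fin n) (Fin n) ℂ)) = 1 := by
  induction N with
  | zero => exact tens_zero' n _
  | succ N ih => rw [tens_succ, ih, op_one]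

lemma tens_conjT {N : ℕ} (A : Fin N → Matrix (Fin n) (Fin n) ℂ) :
    (tens n N A)ᴴ = tens n N (fun k => (A k)ᴴ) := by
  ext x y
  simp only [tens, Matrix.conjTranspose_apply, Matrix.of_apply, Complex.star_def, map_prod]

lemma tens_eq_zero {N : ℕ} (A : Fin N → Matrix (Fin n) (Fin n) ℂ) (k : Fin N)
    (hk : A k = 0) : tens n N A = 0 := by
  ext x y
  simp only [tens, Matrix.of_apply, Matrix.zero_apply]
  apply Finset.prod_eq_zero (Finset.mem_univ k)
  rw [hk]
  simp

end Op
section Struct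

variable (n : ℕ) [NeZero n]

lemma op_congr {M : ℕ} {A A' : Matrix (Fin n) (Fin n) ℂ}
    {B B' : Matrix (Fin M → Fin n) (Fin M → Fin n) ℂ}
    (hA : A = A') (hB : B = B') : op n A B = op n A' B' := by rw [hA, hB]

lemma FM_succ (M : ℕ) (r : Fin n) : FM n (M+1) r = op n (fM n r) 1 := by
  unfold FM
  rw [tens_succ]
  refine op_congr n ?_ ?_
  · simp
  · rw [← tens_one n (N := M)]
    exact tens_congr n fun k => by simp [Fin.val_succ]

lemma EM_zero (N : ℕ) (i : Fin 0 → Fin n) : EM n N 0 i = 1 := by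
  unfold EM
  rw [← tens_one n (N := N)]
  exact tens_congr n fun k => by simp

lemma EM_succ (M m : ℕ) (i : Fin (m+1) → Fin n) :
    EM n (M+1) (m+1) i = op n (eM n (i 0)) (EM n M m (Fin.tail i)) := by
  unfold EM
  rw [tens_succ]
  refine op_congr n ?_ ?_
  · rw [dif_pos (show ((0 : Fin (M+1)) : ℕ) < m+1 from Nat.succ_pos m)]
    congr 1
  · refine tens_congr n fun k => ?_
    simp only [Fin.val_succ]
    by_cases hk : (k : ℕ) < m
    · rw [dif_pos (by omega : (k:ℕ) + 1 < m + 1), dif_pos hk]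
      congr 1
    · rw [dif_neg (by omega), dif_neg hk]

lemma uM1 (M : ℕ) : uM n (M+1) 1 = ∑ p : Fin n, op n (wM n ^ (p:ℕ)) (FM n M p) := by
  unfold uM
  refine Finset.sum_congr rfl fun p _ => ?_
  rw [tens_succ]
  refine op_congr n ?_ ?_
  · simp
  · unfold FM
    refine tens_congr n fun k => ?_
    simp only [Fin.val_succ]
    rw [if_neg (by omega)]
    by_cases hk : (k : ℕ) = 0
    · rw [if_pos (by omega), if_pos hk]
    · rw [if_neg (by omega), if_neg hk]

lemma uM_succ2 (M s : ℕ) : uM n (M+1) (s+2) = op n 1 (uM n M (s+1)) := by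
  unfold uM
  rw [op_sum_right]
  refine Finset.sum_congr rfl fun p _ => ?_
  rw [tens_succ]
  refine op_congr n ?_ ?_
  · rw [if_neg (by simp), if_neg (by simp)]
  · refine tens_congr n fun k => ?_
    simp only [Fin.val_succ]
    by_cases h1 : (k:ℕ) + 1 = s + 1
    · rw [if_pos (by omega), if_pos h1]
    · rw [if_neg (by omega)]
      by_cases h2 : (k:ℕ) = s + 1
      · rw [if_pos (by omega), if_neg h1, if_pos h2]
      · rw [if_neg (by omega), if_neg h1, if_neg h2]

lemma UM_zero (N : ℕ) : UM n N 0 = 1 := by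
  unfold UM
  simp

lemma UM_succ (M m : ℕ) : UM n (M+1) (m+1) = uM n (M+1) 1 * op n 1 (UM n M m) := by
  unfold UM
  rw [List.range_succ_eq_map, List.map_cons, List.prod_cons]
  congr 1
  rw [List.map_map]
  have key : ∀ l : List ℕ, (l.map ((fun s => uM n (M+1) (s+1)) ∘ Nat.succ)).prod
      = op n 1 ((l.map (fun s => uM n M (s+1))).prod) := by
    intro l
    induction l with
    | nil => simpa using (op_one n).symm
    | cons a l ih =>
      simp only [List.map_cons, List.prod_cons, ih, Function.comp]
      rw [show uM n (M+1) (a + 1 + 1) = op n 1 (uM n M (a+1)) from uM_succ2 n M a]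
      rw [op_mul, one_mul]
  exact key (List.range m)

lemma wpow_unitary (p : ℕ) : (wM n ^ p)ᴴ * wM n ^ p = 1 := by
  ext a b
  rw [wpowH_mul_apply, wM_pow_apply, Matrix.one_apply]
  by_cases h : a = b
  · rw [if_pos (by rw [h, sub_add_cancel]), if_pos h]
  · rw [if_neg (fun hh => h (by rw [hh, sub_add_cancel])), if_neg h]

lemma FM_herm (M : ℕ) (r : Fin n) : (FM n (M+1) r)ᴴ = FM n (M+1) r := by
  rw [FM_succ, op_conjT, fM_herm, Matrix.conjTranspose_one]

lemma FM_mul_FM (M : ℕ) (p q : Fin n) :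
    FM n (M+1) p * FM n (M+1) q = if p = q then FM n (M+1) p else 0 := by
  rw [FM_succ, FM_succ, op_mul, fM_mul_fM, one_mul]
  by_cases h : p = q
  · rw [if_pos h, if_pos h]
  · rw [if_neg h, if_neg h, op_zero_left]

lemma sum_FM (M : ℕ) : ∑ p : Fin n, FM n (M+1) p = 1 := by
  have h : ∀ p : Fin n, FM n (M+1) p = op n (fM n p) 1 := fun p => FM_succ n M p
  rw [Finset.sum_congr rfl (fun p _ => h p), ← op_sum_left, sum_fM, op_one]

lemma uM1_herm_mul (M : ℕ) : (uM n (M+2) 1)ᴴ * uM n (M+2) 1 = 1 := by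
  rw [uM1, Matrix.conjTranspose_sum]
  have hct : ∀ p : Fin n, (op n (wM n ^ (p:ℕ)) (FM n (M+1) p))ᴴ
      = op n ((wM n ^ (p:ℕ))ᴴ) (FM n (M+1) p) := fun p => by
    rw [op_conjT, FM_herm]
  rw [Finset.sum_congr rfl (fun p _ => hct p), Finset.sum_mul_sum]
  have hterm : ∀ p q : Fin n,
      op n ((wM n ^ (p:ℕ))ᴴ) (FM n (M+1) p) * op n (wM n ^ (q:ℕ)) (FM n (M+1) q)
        = if q = p then op n 1 (FM n (M+1) p) else 0 := by
    intro p q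
    rw [op_mul, FM_mul_FM]
    by_cases h : q = p
    · rw [if_pos h, if_pos h.symm, h, wpow_unitary]
    · rw [if_neg h, if_neg (fun hh => h hh.symm), op_zero_right]
  have hsum : ∀ p : Fin n,
      ∑ q : Fin n, op n ((wM n ^ (p:ℕ))ᴴ) (FM n (M+1) p) * op n (wM n ^ (q:ℕ)) (FM n (M+1) q)
        = op n 1 (FM n (M+1) p) := by
    intro p
    rw [Finset.sum_congr rfl (fun q _ => hterm p q)]
    rw [Finset.sum_ite_eq' Finset.univ p (fun _ => op n 1 (FM n (M+1) p))]
    simp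
  rw [Finset.sum_congr rfl (fun p _ => hsum p), ← op_sum_right, sum_FM, op_one]

lemma UM_unitary : ∀ m : ℕ, (UM n (m+1) m)ᴴ * UM n (m+1) m = 1 := by
  intro m
  induction m with
  | zero => rw [UM_zero, Matrix.conjTranspose_one, one_mul]
  | succ m ih =>
    rw [UM_succ, Matrix.conjTranspose_mul, op_conjT, Matrix.conjTranspose_one]
    calc (op n 1 (UM n (m+1) m)ᴴ) * (uM n (m+2) 1)ᴴ * (uM n (m+2) 1 * op n 1 (UM n (m+1) m))
        = op n 1 (UM n (m+1) m)ᴴ * ((uM n (m+2) 1)ᴴ * uM n (m+2) 1) * op n 1 (UM n (m+1) m) := by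
          noncomm_ring
      _ = op n 1 (UM n (m+1) m)ᴴ * op n 1 (UM n (m+1) m) := by
          rw [uM1_herm_mul, mul_one]
      _ = 1 := by rw [op_mul, one_mul, ih, op_one]

lemma EM_mul {N M : ℕ} (hMN : M ≤ N) (i j : Fin M → Fin n) :
    EM n N M i * EM n N M j = if i = j then EM n N M i else 0 := by
  unfold EM
  rw [tens_mul]
  by_cases h : i = j
  · subst h
    rw [if_pos rfl]
    refine tens_congr n fun k => ?_
    by_cases hk : (k : ℕ) < M
    · rw [dif_pos hk, eM_mul_eM, if_pos rfl]
    · rw [dif_neg hk, one_mul]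
  · rw [if_neg h]
    obtain ⟨t, ht⟩ : ∃ t, i t ≠ j t := by
      by_contra hc; push_neg at hc; exact h (funext hc)
    have ht2 : (t:ℕ) < N := lt_of_lt_of_le t.isLt hMN
    refine tens_eq_zero n _ ⟨(t:ℕ), ht2⟩ ?_
    have hcomp : ∀ f : Fin M → Fin n,
        (if h : ((⟨(t:ℕ), ht2⟩ : Fin N) : ℕ) < M
          then eM n (f ⟨((⟨(t:ℕ), ht2⟩ : Fin N) : ℕ), h⟩) else 1)
          = eM n (f t) := by
      intro f
      rw [dif_pos (show ((⟨(t:ℕ), ht2⟩ : Fin N) : ℕ) < M from t.isLt)]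
    rw [hcomp i, hcomp j, eM_mul_eM, if_neg ht]

lemma EM_herm {N M : ℕ} (i : Fin M → Fin n) : (EM n N M i)ᴴ = EM n N M i := by
  unfold EM
  rw [tens_conjT]
  refine tens_congr n fun k => ?_
  by_cases hk : (k : ℕ) < M
  · rw [dif_pos hk, eM_herm]
  · rw [dif_neg hk, Matrix.conjTranspose_one]

end Struct
section Master

variable (n : ℕ) [NeZero n]

lemma master : ∀ (m : ℕ) (i j : Fin m → Fin n) (r r' : Fin n),
    Matrix.trace (EM n (m+1) m i * FM n (m+1) r *
      (UM n (m+1) m * EM n (m+1) m j * (UM n (m+1) m)ᴴ) * FM n (m+1) r')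
      = if r = r' then ((n:ℂ)^m)⁻¹ else 0 := by
  intro m
  induction m with
  | zero =>
    intro i j r r'
    rw [EM_zero, EM_zero, UM_zero, Matrix.conjTranspose_one]
    simp only [one_mul, mul_one]
    rw [FM_mul_FM]
    by_cases h : r = r'
    · rw [if_pos h, if_pos h, pow_zero, inv_one, FM_succ, op_trace, trace_fM, Matrix.trace_one]
      simp
    · rw [if_neg h, if_neg h, Matrix.trace_zero]
  | succ m ih =>
    intro i j r r'
    rw [EM_succ n (m+1) m i, EM_succ n (m+1) m j, FM_succ n (m+1) r, FM_succ n (m+1) r',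
      UM_succ n (m+1) m, uM1 n (m+1)]
    rw [Matrix.conjTranspose_mul, Matrix.conjTranspose_sum]
    simp only [op_conjT, Matrix.conjTranspose_one, FM_herm]
    simp only [Finset.sum_mul, Finset.mul_sum, mul_assoc]
    simp only [op_mul, one_mul, mul_one]
    simp only [Matrix.trace_sum]
    have hterm : ∀ q p : Fin n,
        Matrix.trace (op n
          (eM n (i 0) * (fM n r * (wM n ^ (p:ℕ) * (eM n (j 0) * ((wM n ^ (q:ℕ))ᴴ * fM n r')))))
          (EM n (m+1) m (Fin.tail i) * (FM n (m+1) p * (UM n (m+1) m *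
            (EM n (m+1) m (Fin.tail j) * ((UM n (m+1) m)ᴴ * FM n (m+1) q))))))
        = if p = q then
            Matrix.trace (eM n (i 0) * (fM n r *
              (wM n ^ (p:ℕ) * (eM n (j 0) * ((wM n ^ (p:ℕ))ᴴ * fM n r'))))) * ((n:ℂ)^m)⁻¹
          else 0 := by
      intro q p
      rw [op_trace]
      have hassoc : EM n (m+1) m (Fin.tail i) * (FM n (m+1) p * (UM n (m+1) m *
            (EM n (m+1) m (Fin.tail j) * ((UM n (m+1) m)ᴴ * FM n (m+1) q))))
          = EM n (m + 1) m (Fin.tail i) * FM n (m + 1) p *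
              (UM n (m + 1) m * EM n (m + 1) m (Fin.tail j) * (UM n (m + 1) m)ᴴ) *
              FM n (m + 1) q := by
        simp only [mul_assoc]
      rw [hassoc, ih (Fin.tail i) (Fin.tail j) p q]
      by_cases hpq : p = q
      · subst hpq; rw [if_pos rfl, if_pos rfl]
      · rw [if_neg hpq, if_neg hpq, mul_zero]
    rw [Finset.sum_congr rfl (fun q _ => Finset.sum_congr rfl (fun p _ => hterm q p))]
    have hinner : ∀ q : Fin n,
        (∑ p : Fin n, if p = q then
            Matrix.trace (eM n (i 0) * (fM n r *
              (wM n ^ (p:ℕ) * (eM n (j 0) * ((wM n ^ (p:ℕ))ᴴ * fM n r'))))) * ((n:ℂ)^m)⁻¹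
          else 0)
        = Matrix.trace (eM n (i 0) * (fM n r *
              (wM n ^ (q:ℕ) * (eM n (j 0) * ((wM n ^ (q:ℕ))ᴴ * fM n r'))))) * ((n:ℂ)^m)⁻¹ := by
      intro q
      rw [Finset.sum_ite_eq' Finset.univ q (fun p => Matrix.trace (eM n (i 0) * (fM n r *
        (wM n ^ (p:ℕ) * (eM n (j 0) * ((wM n ^ (p:ℕ))ᴴ * fM n r'))))) * ((n:ℂ)^m)⁻¹)]
      simp
    rw [Finset.sum_congr rfl (fun q _ => hinner q), ← Finset.sum_mul,
      key0sum n (i 0) (j 0) r r']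
    by_cases h : r = r'
    · rw [if_pos h, if_pos h, pow_succ, mul_inv, mul_comm]
    · rw [if_neg h, if_neg h, zero_mul]

end Master
section Final

variable (n : ℕ) [NeZero n]

lemma trace_reduce {α : Type*} [Fintype α] [DecidableEq α]
    (Ei Fr Ej Ej' Fr' Ei' U : Matrix α α ℂ)
    (hU : Uᴴ * U = 1) (hEj' : Ej'ᴴ = Ej') (hFr' : Fr'ᴴ = Fr') (hEi' : Ei'ᴴ = Ei') :
    (Ei * Fr * (U * Ej * Uᴴ)) * (Ei' * Fr' * (U * Ej' * Uᴴ))ᴴ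
      = Ei * Fr * (U * (Ej * Ej') * Uᴴ) * Fr' * Ei' := by
  simp only [Matrix.conjTranspose_mul, Matrix.conjTranspose_conjTranspose, hEj', hFr', hEi']
  have h : ∀ Z : Matrix α α ℂ, Uᴴ * (U * Z) = Z := fun Z => by rw [← mul_assoc, hU, one_mul]
  simp only [mul_assoc, h]

lemma trace_reduce2 {α : Type*} [Fintype α] [DecidableEq α]
    (Ei Fr X Fr' Ei' : Matrix α α ℂ) :
    Matrix.trace (Ei * Fr * X * Fr' * Ei') = Matrix.trace ((Ei' * Ei) * Fr * X * Fr') := by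
  rw [Matrix.trace_mul_comm]
  simp only [← mul_assoc]

lemma Xtrace (m : ℕ) (i : Fin m → Fin n) (r : Fin n) (j : Fin m → Fin n)
    (i' : Fin m → Fin n) (r' : Fin n) (j' : Fin m → Fin n) :
    Matrix.trace ((EM n (m+1) m i * FM n (m+1) r *
        (UM n (m+1) m * EM n (m+1) m j * (UM n (m+1) m)ᴴ)) *
      (EM n (m+1) m i' * FM n (m+1) r' *
        (UM n (m+1) m * EM n (m+1) m j' * (UM n (m+1) m)ᴴ))ᴴ)
      = if i = i' ∧ r = r' ∧ j = j' then ((n:ℂ)^m)⁻¹ else 0 := by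
  rw [trace_reduce _ _ _ _ _ _ _ (UM_unitary n m) (EM_herm n j') (FM_herm n m r')
    (EM_herm n i')]
  by_cases hj : j = j'
  · subst hj
    rw [EM_mul n (Nat.le_succ m) j j, if_pos rfl, trace_reduce2]
    by_cases hi : i = i'
    · subst hi
      rw [EM_mul n (Nat.le_succ m) i i, if_pos rfl, master n m i j r r']
      by_cases hr : r = r'
      · rw [if_pos hr, if_pos ⟨rfl, hr, rfl⟩]
      · rw [if_neg hr, if_neg (fun hc => hr hc.2.1)]
    · rw [EM_mul n (Nat.le_succ m) i' i, if_neg (fun hc => hi hc.symm)]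
      rw [if_neg (fun hc => hi hc.1)]
      simp
  · rw [EM_mul n (Nat.le_succ m) j j', if_neg hj, if_neg (fun hc => hj hc.2.2)]
    simp

end Final
theorem statement2 (n : ℕ) [NeZero n] (hn : 2 ≤ n) (m : ℕ) :
    let X : (Fin m → Fin n) → Fin n → (Fin m → Fin n) →
        Matrix (Fin (m + 1) → Fin n) (Fin (m + 1) → Fin n) ℂ :=
      fun i r j => EM n (m + 1) m i * FM n (m + 1) r *
        (UM n (m + 1) m * EM n (m + 1) m j * (UM n (m + 1) m)ᴴ)
    (∀ (i : Fin m → Fin n) (r : Fin n) (j : Fin m → Fin n)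
        (i' : Fin m → Fin n) (r' : Fin n) (j' : Fin m → Fin n),
        nτ (X i r j * (X i' r' j')ᴴ) =
          if (i, r, j) = (i', r', j') then ((n : ℂ) ^ (2 * m + 1))⁻¹ else 0) ∧
      LinearIndependent ℂ
        (fun p : (Fin m → Fin n) × Fin n × (Fin m → Fin n) => X p.1 p.2.1 p.2.2) := by
  intro X
  have hX : ∀ (i : Fin m → Fin n) (r : Fin n) (j : Fin m → Fin n),
      X i r j = EM n (m + 1) m i * FM n (m + 1) r *
        (UM n (m + 1) m * EM n (m + 1) m j * (UM n (m + 1) m)ᴴ) := fun _ _ _ => rfl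
  have hne : (n:ℂ) ≠ 0 := ncast_ne_zero n
  have htr : ∀ (i : Fin m → Fin n) (r : Fin n) (j : Fin m → Fin n)
      (i' : Fin m → Fin n) (r' : Fin n) (j' : Fin m → Fin n),
      Matrix.trace (X i r j * (X i' r' j')ᴴ)
        = if i = i' ∧ r = r' ∧ j = j' then ((n:ℂ)^m)⁻¹ else 0 := by
    intro i r j i' r' j'
    rw [hX, hX]
    exact Xtrace n m i r j i' r' j'
  have hcard : ((Fintype.card (Fin (m+1) → Fin n)) : ℂ) = (n:ℂ)^(m+1) := by
    rw [Fintype.card_fun, Fintype.card_fin, Fintype.card_fin]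
    push_cast
    ring
  constructor
  · intro i r j i' r' j'
    have hτ : nτ (X i r j * (X i' r' j')ᴴ)
        = Matrix.trace (X i r j * (X i' r' j')ᴴ) / ((Fintype.card (Fin (m+1) → Fin n)) : ℂ) :=
      rfl
    rw [hτ, htr i r j i' r' j', hcard]
    by_cases h : (i, r, j) = (i', r', j')
    · have h1 : i = i' ∧ r = r' ∧ j = j' := by
        simpa [Prod.ext_iff] using h
      rw [if_pos h1, if_pos h, div_eq_mul_inv, ← mul_inv, ← pow_add,
        show m + (m+1) = 2*m+1 by omega]
    · have h1 : ¬(i = i' ∧ r = r' ∧ j = j') := by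
        intro hc
        exact h (by simp [Prod.ext_iff, hc.1, hc.2.1, hc.2.2])
      rw [if_neg h1, if_neg h, zero_div]
  · rw [Fintype.linearIndependent_iff]
    intro g hg p
    have h0 : Matrix.trace ((∑ q : (Fin m → Fin n) × Fin n × (Fin m → Fin n),
        g q • X q.1 q.2.1 q.2.2) * (X p.1 p.2.1 p.2.2)ᴴ) = 0 := by
      rw [hg, Matrix.zero_mul, Matrix.trace_zero]
    rw [Finset.sum_mul] at h0
    simp only [smul_mul_assoc] at h0
    rw [Matrix.trace_sum] at h0
    simp only [Matrix.trace_smul, smul_eq_mul] at h0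
    have hq : ∀ q : (Fin m → Fin n) × Fin n × (Fin m → Fin n),
        g q * Matrix.trace (X q.1 q.2.1 q.2.2 * (X p.1 p.2.1 p.2.2)ᴴ)
          = if q = p then g q * ((n:ℂ)^m)⁻¹ else 0 := by
      intro q
      rw [htr]
      have hiff : (q.1 = p.1 ∧ q.2.1 = p.2.1 ∧ q.2.2 = p.2.2) ↔ (q = p) := by
        constructor
        · rintro ⟨h1, h2, h3⟩
          exact Prod.ext_iff.2 ⟨h1, Prod.ext_iff.2 ⟨h2, h3⟩⟩
        · rintro rfl; exact ⟨rfl, rfl, rfl⟩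
      rw [if_congr hiff rfl rfl]
      by_cases hqp : q = p
      · rw [if_pos hqp, if_pos hqp]
      · rw [if_neg hqp, if_neg hqp, mul_zero]
    rw [Finset.sum_congr rfl (fun q _ => hq q)] at h0
    rw [Finset.sum_ite_eq' Finset.univ p (fun q => g q * ((n:ℂ)^m)⁻¹)] at h0
    simp only [Finset.mem_univ, if_true] at h0
    have hc : ((n:ℂ)^m)⁻¹ ≠ 0 := inv_ne_zero (pow_ne_zero m hne)
    exact (mul_eq_zero.1 h0).resolve_right hc
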